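/- Let 𝓕 be a family of finite simple graphs closed under restriction to connected components. If a graph G belongs to the homomorphism distinguishing closure cl(𝓕), then every connected component of G also belongs to cl(𝓕). -/

import Mathlib

open SimpleGraph

/-- Graphs `H` and `H'` are homomorphism indistinguishable over the family `𝓕`:
`hom(F,H) = hom(F,H')` for every finite graph `F` in `𝓕`. -/
def HomIndist (𝓕 : ∀ ⦃V : Type⦄, SimpleGraph V → Prop)
    {β γ : Type} (H : SimpleGraph β) (H' : SimpleGraph γ) : Prop :=
  ∀ (V : Type) [Fintype V] (F : SimpleGraph V), 𝓕 F →
    Nat.card (F →g H) = Nat.card (F →g H')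

/-- `F` belongs to the homomorphism distinguishing closure `cl(𝓕)`:
whenever `H ≅_𝓕 H'` (for finite graphs `H`, `H'`), also `hom(F,H) = hom(F,H')`. -/
def InHomClosure (𝓕 : ∀ ⦃V : Type⦄, SimpleGraph V → Prop)
    {V : Type} (F : SimpleGraph V) : Prop :=
  ∀ (β γ : Type) [Fintype β] [Fintype γ] (H : SimpleGraph β) (H' : SimpleGraph γ),
    HomIndist 𝓕 H H' → Nat.card (F →g H) = Nat.card (F →g H')


namespace HDCAux

variable {V W : Type*}

instance homFinite [Finite V] [Finite W] (G : SimpleGraph V) (H : SimpleGraph W) :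
    Finite (G →g H) :=
  Finite.of_injective (fun f => (f : V → W)) DFunLike.coe_injective

noncomputable instance fintypeCC [Finite V] {G : SimpleGraph V} :
    Fintype G.ConnectedComponent := Fintype.ofFinite _

lemma mem_supp_self (G : SimpleGraph V) (v : V) : v ∈ (G.connectedComponentMk v).supp :=
  (ConnectedComponent.mem_supp_iff _ _).mpr rfl

lemma apply_congr {G : SimpleGraph V} {H : SimpleGraph W}
    (F : ∀ C : G.ConnectedComponent, induce C.supp G →g H)
    {C C' : G.ConnectedComponent} (h : C = C') {v : V} (hv : v ∈ C.supp) (hv' : v ∈ C'.supp) :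
    F C ⟨v, hv⟩ = F C' ⟨v, hv'⟩ := by subst h; rfl

/-- restrict a hom to a component -/
def restrictHom {G : SimpleGraph V} {H : SimpleGraph W} (f : G →g H)
    (C : G.ConnectedComponent) : induce C.supp G →g H where
  toFun v := f v.1
  map_rel' h := f.map_rel' h

/-- glue homs on components -/
def glueHom {G : SimpleGraph V} {H : SimpleGraph W}
    (F : ∀ C : G.ConnectedComponent, induce C.supp G →g H) : G →g H where
  toFun v := F (G.connectedComponentMk v) ⟨v, mem_supp_self G v⟩
  map_rel' := by
    intro u v huv
    have h : G.connectedComponentMk v = G.connectedComponentMk u :=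
      (ConnectedComponent.connectedComponentMk_eq_of_adj huv).symm
    have hv : v ∈ (G.connectedComponentMk u).supp :=
      (ConnectedComponent.mem_supp_iff _ _).mpr h
    rw [apply_congr F h (mem_supp_self G v) hv]
    exact (F (G.connectedComponentMk u)).map_rel' huv

noncomputable def homComponentsEquiv (G : SimpleGraph V) (H : SimpleGraph W) :
    (G →g H) ≃ ∀ C : G.ConnectedComponent, (induce C.supp G →g H) where
  toFun f C := restrictHom f C
  invFun := glueHom
  left_inv f := DFunLike.ext _ _ fun v => rfl
  right_inv F := by
    funext C
    refine DFunLike.ext _ _ ?_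
    rintro ⟨v, hv⟩
    exact apply_congr F ((ConnectedComponent.mem_supp_iff C v).mp hv) (mem_supp_self G v) hv

lemma card_hom_eq_prod [Finite V] (G : SimpleGraph V) (H : SimpleGraph W) :
    Nat.card (G →g H) = ∏ C : G.ConnectedComponent, Nat.card (induce C.supp G →g H) := by
  rw [Nat.card_congr (homComponentsEquiv G H), Nat.card_pi]

lemma connected_induce_supp {G : SimpleGraph V} (C : G.ConnectedComponent) :
    (induce C.supp G).Connected := by
  classical
  obtain ⟨x, hx⟩ := C.exists_rep
  rw [connected_iff]
  refine ⟨?_, ⟨⟨x, (ConnectedComponent.mem_supp_iff _ _).mpr hx⟩⟩⟩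
  · rintro ⟨a, ha⟩ ⟨b, hb⟩
    rw [ConnectedComponent.mem_supp_iff] at ha hb
    obtain ⟨p⟩ := ConnectedComponent.exact (ha.trans hb.symm)
    have hsub : {w | w ∈ p.support} ⊆ C.supp := by
      intro w hw
      rw [Set.mem_setOf_eq] at hw
      rw [ConnectedComponent.mem_supp_iff, ← ha]
      exact (ConnectedComponent.sound ⟨p.takeUntil w hw⟩).symm
    have hc := (Walk.connected_induce_support p).preconnected
      ⟨a, p.start_mem_support⟩ ⟨b, p.end_mem_support⟩
    exact hc.map (G.induceHomOfLE hsub).toHom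

end HDCAux

namespace HDCAux2

variable {U α β : Type*}

/-- `n` disjoint copies of `H`. -/
def copies (n : ℕ) (H : SimpleGraph α) : SimpleGraph (Fin n × α) where
  Adj x y := x.1 = y.1 ∧ H.Adj x.2 y.2
  symm := ⟨by rintro ⟨i, x⟩ ⟨j, y⟩ ⟨rfl, h⟩; exact ⟨rfl, h.symm⟩⟩
  loopless := ⟨by rintro ⟨i, x⟩ ⟨-, h⟩; exact H.irrefl h⟩

lemma constant_of_preconnected {σ : Type*} {F : SimpleGraph U} (hF : F.Preconnected)
    (g : U → σ) (h : ∀ ⦃u v⦄, F.Adj u v → g u = g v) (u v : U) : g u = g v := by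
  obtain ⟨p⟩ := hF u v
  induction p with
  | nil => rfl
  | cons ha _ ih => exact (h ha).trans ih

lemma isLeft_eq_of_adj {A : SimpleGraph α} {B : SimpleGraph β} {x y : α ⊕ β}
    (h : (A ⊕g B).Adj x y) : x.isLeft = y.isLeft := by
  cases x <;> cases y <;> simp_all [SimpleGraph.sum]

@[simp] lemma sum_adj_inl {A : SimpleGraph α} {B : SimpleGraph β} {a b : α} :
    (A ⊕g B).Adj (Sum.inl a) (Sum.inl b) ↔ A.Adj a b := Iff.rfl

@[simp] lemma sum_adj_inr {A : SimpleGraph α} {B : SimpleGraph β} {a b : β} :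
    (A ⊕g B).Adj (Sum.inr a) (Sum.inr b) ↔ B.Adj a b := Iff.rfl

lemma card_hom_sum [Finite U] [Finite α] [Finite β] {F : SimpleGraph U} (hF : F.Connected)
    (A : SimpleGraph α) (B : SimpleGraph β) :
    Nat.card (F →g A ⊕g B) = Nat.card (F →g A) + Nat.card (F →g B) := by
  have : Finite (F →g A ⊕g B) :=
    Finite.of_injective (fun f => (f : U → α ⊕ β)) DFunLike.coe_injective
  have : Finite (F →g A) :=
    Finite.of_injective (fun f => (f : U → α)) DFunLike.coe_injective
  have : Finite (F →g B) :=
    Finite.of_injective (fun f => (f : U → β)) DFunLike.coe_injective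
  obtain ⟨u0⟩ := hF.nonempty
  have hb : Function.Bijective (fun fg : (F →g A) ⊕ (F →g B) =>
      Sum.elim (fun g => (Embedding.sumInl (H := B)).toHom.comp g)
        (fun g => (Embedding.sumInr (G := A)).toHom.comp g) fg) := by
    constructor
    · rintro (g | g) (g' | g') h
      · refine congrArg Sum.inl (DFunLike.ext _ _ fun v => ?_)
        have := DFunLike.congr_fun h v
        simpa using this
      · have := DFunLike.congr_fun h u0
        simp at this
      · have := DFunLike.congr_fun h u0
        simp at this
      · refine congrArg Sum.inr (DFunLike.ext _ _ fun v => ?_)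
        have := DFunLike.congr_fun h v
        simpa using this
    · intro f
      have hconst : ∀ v, (f v).isLeft = (f u0).isLeft :=
        fun v => constant_of_preconnected hF.preconnected (fun u => (f u).isLeft)
          (fun u v h => isLeft_eq_of_adj (f.map_rel' h)) v u0
      cases hu0 : f u0 with
      | inl a =>
        have hl : ∀ v, ∃ a, f v = Sum.inl a := by
          intro v
          have := hconst v
          rw [hu0] at this
          exact Sum.isLeft_iff.mp this
        choose g hg using hl
        refine ⟨Sum.inl ⟨g, fun {u v} h => ?_⟩, DFunLike.ext _ _ fun v => ?_⟩
        · have := f.map_rel h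
          rw [hg u, hg v] at this
          exact this
        · exact (hg v).symm
      | inr a =>
        have hl : ∀ v, ∃ a, f v = Sum.inr a := by
          intro v
          have := hconst v
          rw [hu0] at this
          exact Sum.isRight_iff.mp (by simpa [Sum.not_isLeft] using this)
        choose g hg using hl
        refine ⟨Sum.inr ⟨g, fun {u v} h => ?_⟩, DFunLike.ext _ _ fun v => ?_⟩
        · have := f.map_rel h
          rw [hg u, hg v] at this
          exact this
        · exact (hg v).symm
  rw [← Nat.card_eq_of_bijective _ hb, Nat.card_sum]

lemma card_hom_copies [Finite U] [Finite α] {F : SimpleGraph U} (hF : F.Connected)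
    (n : ℕ) (A : SimpleGraph α) :
    Nat.card (F →g copies n A) = n * Nat.card (F →g A) := by
  have : Finite (F →g copies n A) :=
    Finite.of_injective (fun f => (f : U → Fin n × α)) DFunLike.coe_injective
  have : Finite (F →g A) :=
    Finite.of_injective (fun f => (f : U → α)) DFunLike.coe_injective
  obtain ⟨u0⟩ := hF.nonempty
  have hb : Function.Bijective (fun ig : Fin n × (F →g A) =>
      (⟨fun v => (ig.1, ig.2 v), fun {u v} h => ⟨rfl, ig.2.map_rel' h⟩⟩ : F →g copies n A)) := by
    constructor
    · rintro ⟨i, g⟩ ⟨i', g'⟩ h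
      have h1 := DFunLike.congr_fun h u0
      have hi : i = i' := congrArg Prod.fst h1
      refine Prod.ext hi (DFunLike.ext _ _ fun v => ?_)
      have := DFunLike.congr_fun h v
      exact congrArg Prod.snd this
    · intro f
      have hconst : ∀ v, (f v).1 = (f u0).1 :=
        fun v => constant_of_preconnected hF.preconnected (fun u => (f u).1)
          (fun u v h => (f.map_rel' h).1) v u0
      refine ⟨⟨(f u0).1, ⟨fun v => (f v).2, fun {u v} h => (f.map_rel' h).2⟩⟩,
        DFunLike.ext _ _ fun v => ?_⟩
      exact Prod.ext (hconst v).symm rfl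
  rw [← Nat.card_eq_of_bijective _ hb, Nat.card_prod, Nat.card_eq_fintype_card, Fintype.card_fin]

end HDCAux2

namespace HDCAux3

open Polynomial in
lemma key_arith {ι : Type*} [Fintype ι] (a b : ι → ℕ) (ha : ∀ i, 0 < a i)
    (h : ∀ s : ℕ, ∏ i, (s * a i + b i) = ∏ i, ((s + 1) * a i)) (j : ι) : a j = b j := by
  classical
  set P : ℚ[X] := ∏ i, (C (a i : ℚ) * X + C (b i : ℚ)) with hP
  set Q : ℚ[X] := ∏ i, (C (a i : ℚ) * X + C (a i : ℚ)) with hQ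
  have hPQ : P = Q := by
    have hroot : ∀ n : ℕ, (P - Q).IsRoot n := by
      intro n
      have hn := h n
      have hc : (∏ i, ((n : ℚ) * a i + b i)) = ∏ i, (((n : ℚ) + 1) * a i) := by
        exact_mod_cast hn
      simp only [IsRoot, eval_sub, hP, hQ, eval_prod, eval_add, eval_mul, eval_C, eval_X,
        sub_eq_zero]
      calc (∏ i, ((a i : ℚ) * n + b i)) = ∏ i, ((n : ℚ) * a i + b i) := by
            refine Finset.prod_congr rfl fun i _ => by ring
        _ = ∏ i, (((n : ℚ) + 1) * a i) := hc
        _ = ∏ i, ((a i : ℚ) * n + a i) := by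
            refine Finset.prod_congr rfl fun i _ => by ring
    have h0 : P - Q = 0 := by
      refine eq_zero_of_infinite_isRoot _ ?_
      exact Set.infinite_of_injective_forall_mem Nat.cast_injective hroot
    exact sub_eq_zero.mp h0
  have haj : (0 : ℚ) < (a j : ℚ) := by exact_mod_cast ha j
  set x : ℚ := -(b j : ℚ) / (a j : ℚ) with hx
  have hPx : P.eval x = 0 := by
    rw [hP, eval_prod]
    refine Finset.prod_eq_zero (Finset.mem_univ j) ?_
    simp only [eval_add, eval_mul, eval_C, eval_X, hx]
    field_simp
    ring
  have hQx : Q.eval x = 0 := by rw [← hPQ]; exact hPx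
  rw [hQ, eval_prod] at hQx
  obtain ⟨i, -, hi⟩ := Finset.prod_eq_zero_iff.mp hQx
  simp only [eval_add, eval_mul, eval_C, eval_X] at hi
  have hai : (0 : ℚ) < (a i : ℚ) := by exact_mod_cast ha i
  have hx1 : x = -1 := by
    have : (a i : ℚ) * (x + 1) = 0 := by ring_nf; ring_nf at hi; linarith
    have := mul_eq_zero.mp this
    rcases this with h' | h'
    · exact absurd h' (ne_of_gt hai)
    · linarith
  rw [hx] at hx1
  field_simp at hx1
  exact_mod_cast (neg_inj.mp hx1).symm

end HDCAux3

open HDCAux HDCAux2 HDCAux3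

/-- If `𝓕` is closed under restriction to connected components and the
finite graph `G` belongs to `cl(𝓕)`, then every connected component of `G` belongs to
`cl(𝓕)`. -/
theorem inHomClosure_connectedComponent (𝓕 : ∀ ⦃V : Type⦄, SimpleGraph V → Prop)
    (hcc : ∀ (V : Type) (G : SimpleGraph V) (c : G.ConnectedComponent),
      𝓕 G → 𝓕 (SimpleGraph.induce c.supp G))
    {V : Type} [Fintype V] (G : SimpleGraph V) (hG : InHomClosure 𝓕 G)
    (c : G.ConnectedComponent) :
    InHomClosure 𝓕 (SimpleGraph.induce c.supp G) := by
  intro β γ _ _ H H' hHH'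
  classical
  set K : SimpleGraph V := ⊤ with hK
  -- a canonical hom from each component into the complete graph `K`
  have hKhom : ∀ C : G.ConnectedComponent, induce C.supp G →g K := fun C =>
    ⟨fun v => v.1, fun {u v} h => by
      have hGadj : G.Adj u.1 v.1 := h
      simp only [hK, top_adj]
      exact hGadj.ne⟩
  set a : G.ConnectedComponent → ℕ :=
    fun C => Nat.card (induce C.supp G →g H ⊕g K) with haDef
  set b : G.ConnectedComponent → ℕ :=
    fun C => Nat.card (induce C.supp G →g H' ⊕g K) with hbDef
  have hpos : ∀ C : G.ConnectedComponent, 0 < a C := by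
    intro C
    have hne : Nonempty (induce C.supp G →g H ⊕g K) :=
      ⟨(Embedding.sumInr (G := H)).toHom.comp (hKhom C)⟩
    exact Nat.card_pos
  -- `s·(H⊕K) ⊕ (H'⊕K)` is 𝓕-indistinguishable from `(s+1)·(H⊕K)`
  have hind : ∀ s : ℕ,
      HomIndist 𝓕 (copies s (H ⊕g K) ⊕g (H' ⊕g K)) (copies (s+1) (H ⊕g K)) := by
    intro s U _ F hF
    rw [card_hom_eq_prod, card_hom_eq_prod]
    refine Finset.prod_congr rfl fun D _ => ?_
    have hDconn := connected_induce_supp D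
    have h1 : Nat.card (induce D.supp F →g H) = Nat.card (induce D.supp F →g H') :=
      hHH' ↥D.supp (induce D.supp F) (hcc U F D hF)
    rw [card_hom_sum hDconn, card_hom_copies hDconn, card_hom_copies hDconn,
      card_hom_sum hDconn, card_hom_sum hDconn, h1]
    ring
  have key : ∀ s : ℕ, ∏ C : G.ConnectedComponent, (s * a C + b C)
      = ∏ C : G.ConnectedComponent, ((s + 1) * a C) := by
    intro s
    have hGcard := hG _ _ (copies s (H ⊕g K) ⊕g (H' ⊕g K)) (copies (s+1) (H ⊕g K)) (hind s)
    rw [card_hom_eq_prod, card_hom_eq_prod] at hGcard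
    calc ∏ C : G.ConnectedComponent, (s * a C + b C)
        = ∏ C : G.ConnectedComponent,
            Nat.card (induce C.supp G →g copies s (H ⊕g K) ⊕g (H' ⊕g K)) := by
          refine Finset.prod_congr rfl fun C _ => ?_
          rw [card_hom_sum (connected_induce_supp C), card_hom_copies (connected_induce_supp C)]
      _ = ∏ C : G.ConnectedComponent,
            Nat.card (induce C.supp G →g copies (s+1) (H ⊕g K)) := hGcard
      _ = ∏ C : G.ConnectedComponent, ((s + 1) * a C) := by
          refine Finset.prod_congr rfl fun C _ => ?_
          rw [card_hom_copies (connected_induce_supp C)]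
  have hab : a c = b c := key_arith a b hpos key c
  have hac : a c = Nat.card (induce c.supp G →g H) + Nat.card (induce c.supp G →g K) :=
    card_hom_sum (connected_induce_supp c) H K
  have hbc : b c = Nat.card (induce c.supp G →g H') + Nat.card (induce c.supp G →g K) :=
    card_hom_sum (connected_induce_supp c) H' K
  rw [hac, hbc] at hab
  exact Nat.add_right_cancel hab
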